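/- The pmf p(x) = q^x p^r / (1+x) * C(r+x-1, x) * 2F1(1, r+x; 2+x; q) with r>0, 0<p<1, q=1-p sums to 1 over x = 0,1,2,..., i.e., it defines a valid probability distribution. -/

import Mathlib

open scoped BigOperators

/-- Pochhammer (rising factorial) `(a)_n`. -/
noncomputable def poch (a : ℝ) (n : ℕ) : ℝ := ∏ i ∈ Finset.range n, (a + i)

/-- Gauss hypergeometric function `₂F₁(a,b;c;z)`. -/
noncomputable def F21 (a b c z : ℝ) : ℝ :=
  ∑' n : ℕ, poch a n * poch b n / poch c n * z ^ n / n.factorial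

/-- Pmf of the Uniform–Negative Binomial distribution `UNB(r,p)`. -/
noncomputable def unbPMF (r p : ℝ) (x : ℕ) : ℝ :=
  (1 - p) ^ x * p ^ r / (x + 1) *
    (Real.Gamma (r + x) / (Real.Gamma r * (x.factorial : ℝ))) *
    F21 1 (r + x) (2 + x) (1 - p)

/-- Pmf of the negative binomial distribution `NB(r,p)` (generalized binomial coefficient). -/
noncomputable def nbPMF (r p : ℝ) (n : ℕ) : ℝ :=
  Real.Gamma (r + n) / (Real.Gamma r * (n.factorial : ℝ)) * p ^ r * (1 - p) ^ n

lemma poch_succ (a : ℝ) (n : ℕ) : poch a (n + 1) = poch a n * (a + n) :=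
  Finset.prod_range_succ _ _

lemma poch_pos {a : ℝ} (ha : 0 < a) (n : ℕ) : 0 < poch a n :=
  Finset.prod_pos fun i _ => by positivity

lemma poch_one (n : ℕ) : poch 1 n = n.factorial := by
  induction n with
  | zero => simp [poch]
  | succ n ih =>
    rw [poch_succ, ih, Nat.factorial_succ]
    push_cast
    ring

lemma Gamma_poch {a : ℝ} (ha : 0 < a) (n : ℕ) :
    Real.Gamma (a + n) = Real.Gamma a * poch a n := by
  induction n with
  | zero => simp [poch]
  | succ n ih =>
    have h : a + (n : ℝ) ≠ 0 := by positivity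
    rw [show a + ((n + 1 : ℕ) : ℝ) = (a + n) + 1 by push_cast; ring,
      Real.Gamma_add_one h, ih, poch_succ]
    ring

lemma poch_two_add (x k : ℕ) :
    ((x + 1).factorial : ℝ) * poch (2 + x) k = ((x + 1 + k).factorial : ℝ) := by
  induction k with
  | zero => simp [poch]
  | succ k ih =>
    rw [poch_succ, ← mul_assoc, ih, show x + 1 + (k + 1) = (x + 1 + k) + 1 from rfl,
      Nat.factorial_succ]
    push_cast
    ring

lemma nbPMF_nonneg {r p : ℝ} (hr : 0 < r) (hp0 : 0 < p) (hp1 : p < 1) (n : ℕ) :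
    0 ≤ nbPMF r p n := by
  have h1 : 0 < Real.Gamma (r + n) := Real.Gamma_pos_of_pos (by positivity)
  have h2 : 0 < Real.Gamma r := Real.Gamma_pos_of_pos hr
  have h3 : (0:ℝ) < 1 - p := by linarith
  unfold nbPMF
  positivity

/-- The negative binomial pmf sums to one, in `ℝ≥0∞`. -/
lemma nb_tsum_one {r p : ℝ} (hr : 0 < r) (hp0 : 0 < p) (hp1 : p < 1) :
    ∑' n : ℕ, ENNReal.ofReal (nbPMF r p n) = 1 := by
  have hq0 : (0:ℝ) < 1 - p := by linarith
  have hΓr : 0 < Real.Gamma r := Real.Gamma_pos_of_pos hr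
  set q : ℝ := 1 - p with hq
  -- Step 1: each term is a Gamma-type integral
  have h1 : ∀ n : ℕ, ENNReal.ofReal (nbPMF r p n) =
      ∫⁻ t in Set.Ioi (0:ℝ), ENNReal.ofReal
        ((p ^ r * q ^ n / (Real.Gamma r * n.factorial)) *
          (Real.exp (-t) * t ^ (r + n - 1))) := by
    intro n
    have hrn : (0:ℝ) < r + n := by positivity
    have hint : MeasureTheory.IntegrableOn
        (fun t : ℝ => (p ^ r * q ^ n / (Real.Gamma r * n.factorial)) *
          (Real.exp (-t) * t ^ (r + n - 1))) (Set.Ioi 0) :=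
      (Real.GammaIntegral_convergent hrn).const_mul _
    rw [← MeasureTheory.ofReal_integral_eq_lintegral_ofReal hint
        ((MeasureTheory.ae_restrict_iff' measurableSet_Ioi).2 (Filter.Eventually.of_forall
          fun t ht => by
            have ht' : (0:ℝ) < t := ht
            positivity))]
    congr 1
    rw [MeasureTheory.integral_const_mul, ← Real.Gamma_eq_integral hrn, nbPMF]
    ring
  rw [tsum_congr h1, ← MeasureTheory.lintegral_tsum (fun n => by fun_prop)]
  -- Step 2: pointwise sum of the series
  have h2 : ∫⁻ t in Set.Ioi (0:ℝ), ∑' n : ℕ, ENNReal.ofReal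
        ((p ^ r * q ^ n / (Real.Gamma r * n.factorial)) *
          (Real.exp (-t) * t ^ (r + n - 1))) =
      ∫⁻ t in Set.Ioi (0:ℝ), ENNReal.ofReal
        ((p ^ r / Real.Gamma r) * (Real.exp (-(p * t)) * t ^ (r - 1))) := by
    refine MeasureTheory.setLIntegral_congr_fun measurableSet_Ioi
      (fun t ht => ?_)
    have ht' : (0:ℝ) < t := ht
    have hterm : ∀ n : ℕ,
        (p ^ r * q ^ n / (Real.Gamma r * n.factorial)) *
          (Real.exp (-t) * t ^ (r + n - 1)) =
        ((p ^ r / Real.Gamma r) * (Real.exp (-t) * t ^ (r - 1))) *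
          ((q * t) ^ n / n.factorial) := by
      intro n
      have hpow : t ^ (r + n - 1) = t ^ (r - 1) * t ^ (n : ℕ) := by
        rw [← Real.rpow_natCast t n, ← Real.rpow_add ht']
        ring_nf
      rw [hpow, mul_pow]
      ring
    simp_rw [hterm]
    have hC : 0 ≤ (p ^ r / Real.Gamma r) * (Real.exp (-t) * t ^ (r - 1)) := by positivity
    have hu : ∀ n : ℕ, (0:ℝ) ≤ (q * t) ^ n / n.factorial := fun n => by positivity
    simp_rw [ENNReal.ofReal_mul hC]
    rw [ENNReal.tsum_mul_left, ← ENNReal.ofReal_tsum_of_nonneg hu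
      (Real.summable_pow_div_factorial _)]
    have hexp : (∑' n : ℕ, ((q * t) ^ n / n.factorial : ℝ)) = Real.exp (q * t) := by
      rw [Real.exp_eq_exp_ℝ, NormedSpace.exp_eq_tsum_div]
    rw [hexp, ← ENNReal.ofReal_mul hC]
    congr 1
    rw [show (-(p * t)) = -t + q * t by rw [hq]; ring, Real.exp_add]
    ring
  rw [h2]
  -- Step 3: evaluate the final integral
  have hint2 : MeasureTheory.IntegrableOn
      (fun t : ℝ => (p ^ r / Real.Gamma r) * (Real.exp (-(p * t)) * t ^ (r - 1)))
      (Set.Ioi 0) := by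
    have := (integrableOn_rpow_mul_exp_neg_mul_rpow (show (-1:ℝ) < r - 1 by linarith)
      one_pos hp0).const_mul (p ^ r / Real.Gamma r)
    refine this.congr ((MeasureTheory.ae_restrict_iff' measurableSet_Ioi).2
      (Filter.Eventually.of_forall fun t ht => ?_))
    simp only [Real.rpow_one]
    ring
  rw [← MeasureTheory.ofReal_integral_eq_lintegral_ofReal hint2
      ((MeasureTheory.ae_restrict_iff' measurableSet_Ioi).2 (Filter.Eventually.of_forall
        fun t ht => by
          have ht' : (0:ℝ) < t := ht
          positivity))]
  rw [MeasureTheory.integral_const_mul]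
  have : ∫ t in Set.Ioi (0:ℝ), Real.exp (-(p * t)) * t ^ (r - 1) =
      (1 / p) ^ r * Real.Gamma r := by
    rw [← Real.integral_rpow_mul_exp_neg_mul_Ioi hr hp0]
    refine MeasureTheory.setIntegral_congr_fun measurableSet_Ioi (fun t ht => ?_)
    ring
  rw [this, show p ^ r / Real.Gamma r * ((1 / p) ^ r * Real.Gamma r) =
      (p ^ r * (1 / p) ^ r) * (Real.Gamma r / Real.Gamma r) by ring,
    div_self hΓr.ne', mul_one, ← Real.mul_rpow hp0.le (by positivity),
    mul_one_div_cancel hp0.ne', Real.one_rpow, ENNReal.ofReal_one]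

/-- The UNB pmf is the tail-average of the NB pmf. -/
lemma unb_eq_tsum {r p : ℝ} (hr : 0 < r) (hp0 : 0 < p) (hp1 : p < 1) (x : ℕ) :
    unbPMF r p x = ∑' k : ℕ, nbPMF r p (x + k) / ((x : ℝ) + k + 1) := by
  have hq0 : (0:ℝ) < 1 - p := by linarith
  have hΓr : 0 < Real.Gamma r := Real.Gamma_pos_of_pos hr
  have hrx : (0:ℝ) < r + x := by positivity
  rw [unbPMF, F21, ← tsum_mul_left]
  refine tsum_congr fun k => ?_
  have hΓ : Real.Gamma (r + x + k) = Real.Gamma (r + x) * poch (r + x) k :=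
    Gamma_poch hrx k
  have hpoch2 : poch (2 + (x:ℝ)) k = ((x + 1 + k).factorial : ℝ) / ((x + 1).factorial : ℝ) := by
    rw [eq_div_iff (by exact_mod_cast (x+1).factorial_ne_zero), mul_comm]
    exact poch_two_add x k
  have hcast : (r : ℝ) + ((x + k : ℕ) : ℝ) = r + x + k := by push_cast; ring
  rw [nbPMF, hcast, hΓ, poch_one, hpoch2]
  have hfac1 : ((x + k : ℕ).factorial : ℝ) ≠ 0 := by exact_mod_cast (x+k).factorial_ne_zero
  have hfac2 : ((x + 1 + k).factorial : ℝ) = ((x:ℝ) + k + 1) * ((x + k : ℕ).factorial : ℝ) := by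
    rw [show x + 1 + k = (x + k) + 1 by ring, Nat.factorial_succ]
    push_cast; ring
  have hfac3 : (((x+1).factorial : ℕ) : ℝ) = ((x:ℝ) + 1) * (x.factorial : ℝ) := by
    rw [Nat.factorial_succ]; push_cast; ring
  have hxk1 : ((x:ℝ) + k + 1) ≠ 0 := by positivity
  have hx1 : ((x:ℝ) + 1) ≠ 0 := by positivity
  have hkfac : ((k.factorial : ℕ) : ℝ) ≠ 0 := by exact_mod_cast k.factorial_ne_zero
  have hxfac : ((x.factorial : ℕ) : ℝ) ≠ 0 := by exact_mod_cast x.factorial_ne_zero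
  rw [hfac2, hfac3, pow_add]
  field_simp

theorem stmt1 (r p : ℝ) (hr : 0 < r) (hp0 : 0 < p) (hp1 : p < 1) :
    (∑' x : ℕ, unbPMF r p x) = 1 := by
  have hnb_nonneg := nbPMF_nonneg hr hp0 hp1
  have hnb_sum := nb_tsum_one hr hp0 hp1
  have hsummable_nb : Summable (nbPMF r p) := by
    have h := ENNReal.summable_toReal (f := fun n => ENNReal.ofReal (nbPMF r p n))
      (by rw [hnb_sum]; exact ENNReal.one_ne_top)
    refine h.congr fun n => ?_
    exact ENNReal.toReal_ofReal (hnb_nonneg n)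
  have hg_nonneg : ∀ x k : ℕ, 0 ≤ nbPMF r p (x + k) / ((x : ℝ) + k + 1) := fun x k => by
    have := hnb_nonneg (x + k)
    positivity
  have hgsum : ∀ x : ℕ, Summable (fun k => nbPMF r p (x + k) / ((x : ℝ) + k + 1)) := by
    intro x
    have h1 : Summable (fun k => nbPMF r p (x + k)) :=
      hsummable_nb.comp_injective (add_right_injective x)
    refine Summable.of_nonneg_of_le (hg_nonneg x) (fun k => ?_) h1
    exact div_le_self (hnb_nonneg (x + k)) (by
      have hx := @Nat.cast_nonneg ℝ _ _ _ x
      have hk := @Nat.cast_nonneg ℝ _ _ _ k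
      linarith)
  have key : ∀ x : ℕ, unbPMF r p x = ∑' k : ℕ, nbPMF r p (x + k) / ((x : ℝ) + k + 1) :=
    unb_eq_tsum hr hp0 hp1
  have hunb_nonneg : ∀ x, 0 ≤ unbPMF r p x := fun x => by
    rw [key x]; exact tsum_nonneg (hg_nonneg x)
  have main : ∑' x : ℕ, ENNReal.ofReal (unbPMF r p x) = 1 := by
    have step1 : ∑' x : ℕ, ENNReal.ofReal (unbPMF r p x) =
        ∑' x : ℕ, ∑' k : ℕ, ENNReal.ofReal (nbPMF r p (x + k) / ((x : ℝ) + k + 1)) := by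
      refine tsum_congr fun x => ?_
      rw [key x, ENNReal.ofReal_tsum_of_nonneg (hg_nonneg x) (hgsum x)]
    rw [step1, ← ENNReal.tsum_prod'
      (f := fun pr : ℕ × ℕ => ENNReal.ofReal (nbPMF r p (pr.1 + pr.2) / ((pr.1 : ℝ) + pr.2 + 1)))]
    rw [← Finset.HasAntidiagonal.sigmaAntidiagonalEquivProd.tsum_eq
      (fun pr : ℕ × ℕ => ENNReal.ofReal (nbPMF r p (pr.1 + pr.2) / ((pr.1 : ℝ) + pr.2 + 1)))]
    rw [ENNReal.tsum_sigma']
    have inner : ∀ n : ℕ, (∑' b : (Finset.HasAntidiagonal.antidiagonal n : Finset (ℕ × ℕ)),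
        ENNReal.ofReal (nbPMF r p ((b:ℕ×ℕ).1 + (b:ℕ×ℕ).2) / (((b:ℕ×ℕ).1 : ℝ) + (b:ℕ×ℕ).2 + 1)))
        = (n + 1 : ℕ) * ENNReal.ofReal (nbPMF r p n / ((n : ℝ) + 1)) := by
      intro n
      rw [tsum_fintype]
      have : ∀ b : (Finset.HasAntidiagonal.antidiagonal n : Finset (ℕ × ℕ)),
          ENNReal.ofReal (nbPMF r p ((b:ℕ×ℕ).1 + (b:ℕ×ℕ).2) / (((b:ℕ×ℕ).1 : ℝ) + (b:ℕ×ℕ).2 + 1))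
          = ENNReal.ofReal (nbPMF r p n / ((n : ℝ) + 1)) := by
        rintro ⟨⟨a, b⟩, hab⟩
        rw [Finset.HasAntidiagonal.mem_antidiagonal] at hab
        simp only [hab]
        congr 1
        rw [← hab]
        push_cast
        ring_nf
      rw [Finset.sum_congr rfl (fun b _ => this b), Finset.sum_const,
        Finset.card_univ, Fintype.card_coe, Finset.Nat.card_antidiagonal, nsmul_eq_mul]
    calc ∑' (n : ℕ), ∑' b : (Finset.HasAntidiagonal.antidiagonal n : Finset (ℕ × ℕ)),
          ENNReal.ofReal (nbPMF r p ((b:ℕ×ℕ).1 + (b:ℕ×ℕ).2) / (((b:ℕ×ℕ).1 : ℝ) + (b:ℕ×ℕ).2 + 1))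
        = ∑' n : ℕ, (n + 1 : ℕ) * ENNReal.ofReal (nbPMF r p n / ((n : ℝ) + 1)) :=
          tsum_congr inner
      _ = ∑' n : ℕ, ENNReal.ofReal (nbPMF r p n) := by
          refine tsum_congr fun n => ?_
          have hn1 : ((n:ℝ) + 1) ≠ 0 := by positivity
          rw [show ((n + 1 : ℕ) : ENNReal) = ENNReal.ofReal ((n : ℝ) + 1) by
              rw [← ENNReal.ofReal_natCast]; push_cast; ring_nf,
            ← ENNReal.ofReal_mul (by positivity)]
          congr 1
          field_simp
      _ = 1 := hnb_sum
  have hsummable : Summable (unbPMF r p) := by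
    have h := ENNReal.summable_toReal (f := fun x => ENNReal.ofReal (unbPMF r p x))
      (by rw [main]; exact ENNReal.one_ne_top)
    refine h.congr fun x => ?_
    exact ENNReal.toReal_ofReal (hunb_nonneg x)
  have := ENNReal.tsum_toReal_eq (f := fun x => ENNReal.ofReal (unbPMF r p x))
    (fun x => ENNReal.ofReal_ne_top)
  rw [main] at this
  simp only [ENNReal.toReal_one] at this
  have h2 : ∑' x : ℕ, unbPMF r p x = ∑' a : ℕ, (ENNReal.ofReal (unbPMF r p a)).toReal :=
    tsum_congr fun x => (ENNReal.toReal_ofReal (hunb_nonneg x)).symm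
  rw [h2, ← this]
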